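/- arXiv:2107.14329 — 3 statements merged into one kernel-verified Lean document; each statement's English description precedes it below -/
import Mathlib

section
/- Let A be an abelian group and H, H₁, ..., Hₙ subgroups of A. If a coset X of H is covered by a finite union of cosets X₁, ..., Xₙ of H₁, ..., Hₙ respectively, then X is covered by the union of those Xᵢ for which H ∩ Hᵢ has finite index in H. (B. H. Neumann's lemma, abelian case.) -/
open Pointwise

/-- B. H. Neumann's lemma (abelian case): if a coset of `H` is covered by finitely many
cosets of subgroups `Hᵢ`, then it is covered by those cosets `Xᵢ` for which
`H ∩ Hᵢ` has finite index in `H`. -/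
theorem neumann_lemma {A : Type*} [AddCommGroup A] {n : ℕ} (H : AddSubgroup A)
    (Hs : Fin n → AddSubgroup A) (a : A) (c : Fin n → A)
    (hcov : (a +ᵥ (H : Set A)) ⊆ ⋃ i, (c i +ᵥ (Hs i : Set A))) :
    (a +ᵥ (H : Set A)) ⊆
      ⋃ i ∈ {i : Fin n | (Hs i).relIndex H ≠ 0}, (c i +ᵥ (Hs i : Set A)) := by
  classical
  -- indices whose coset meets `a +ᵥ H`
  set S : Finset (Fin n) :=
    Finset.univ.filter (fun i => ∃ h : H, a + (h : A) ∈ c i +ᵥ (Hs i : Set A)) with hS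
  have hmem : ∀ i ∈ S, ∃ h : H, a + (h : A) ∈ c i +ᵥ (Hs i : Set A) := by
    intro i hi
    exact (Finset.mem_filter.mp hi).2
  choose d hd using hmem
  -- the cosets `d i +ᵥ (Hs i).addSubgroupOf H` cover the group `↥H`
  have hcovH : ⋃ i ∈ S.attach, (d i i.2) +ᵥ (((Hs i.1).addSubgroupOf H : AddSubgroup H) : Set H)
      = Set.univ := by
    ext h
    simp only [Set.mem_univ, iff_true, Set.mem_iUnion]
    have hx : a + (h : A) ∈ ⋃ i, (c i +ᵥ (Hs i : Set A)) :=
      hcov ⟨(h : A), h.2, rfl⟩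
    obtain ⟨i, hi⟩ := Set.mem_iUnion.mp hx
    have hiS : i ∈ S := Finset.mem_filter.mpr ⟨Finset.mem_univ _, ⟨h, hi⟩⟩
    refine ⟨⟨i, hiS⟩, Finset.mem_attach _ _, ?_⟩
    rw [Set.mem_vadd_set_iff_neg_vadd_mem]
    have h1 : a + (h : A) - c i ∈ Hs i := by
      have := Set.mem_vadd_set_iff_neg_vadd_mem.mp hi
      simpa [sub_eq_neg_add] using this
    have h2 : a + ((d i hiS : H) : A) - c i ∈ Hs i := by
      have := Set.mem_vadd_set_iff_neg_vadd_mem.mp (hd i hiS)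
      simpa [sub_eq_neg_add] using this
    have h3 : (h : A) - ((d i hiS : H) : A) ∈ Hs i := by
      have := (Hs i).sub_mem h1 h2
      simpa [sub_sub_sub_cancel_right, add_sub_add_left_eq_sub] using this
    show -(d i hiS) + h ∈ (Hs i).addSubgroupOf H
    simpa [AddSubgroup.mem_addSubgroupOf, neg_add_eq_sub] using h3
  -- drop the infinite-index cosets
  have hcovH' := AddSubgroup.leftCoset_cover_filter_FiniteIndex hcovH
  -- translate back
  rintro x ⟨h, hh, rfl⟩
  have hhu : (⟨h, hh⟩ : H) ∈ (Set.univ : Set H) := Set.mem_univ _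
  rw [← hcovH'] at hhu
  obtain ⟨i, hi, hmem'⟩ := Set.mem_iUnion₂.mp hhu
  obtain ⟨hiA, hfin⟩ := Finset.mem_filter.mp hi
  refine Set.mem_biUnion (show i.1 ∈ {j : Fin n | (Hs j).relIndex H ≠ 0} from ?_) ?_
  · exact hfin.index_ne_zero
  · -- `a + h ∈ c i +ᵥ Hs i`
    rw [Set.mem_vadd_set_iff_neg_vadd_mem]
    have h2 : a + ((d i.1 i.2 : H) : A) - c i.1 ∈ Hs i.1 := by
      have := Set.mem_vadd_set_iff_neg_vadd_mem.mp (hd i.1 i.2)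
      simpa [sub_eq_neg_add] using this
    have h3 : h - ((d i.1 i.2 : H) : A) ∈ Hs i.1 := by
      have := Set.mem_vadd_set_iff_neg_vadd_mem.mp hmem'
      have : ((-(d i.1 i.2) + ⟨h, hh⟩ : H) : A) ∈ Hs i.1 := this
      simpa [neg_add_eq_sub] using this
    have := (Hs i.1).add_mem h2 h3
    have heq : (a + ((d i.1 i.2 : H) : A) - c i.1) + (h - ((d i.1 i.2 : H) : A))
        = -(c i.1) + (a + h) := by abel
    rw [heq] at this
    exact this
end

section
/- Inclusion–exclusion for cosets: X is contained in X₁ ∪ ... ∪ Xₙ if and only if ∑_{Δ ⊆ {1,...,n}} (−1)^{|Δ|} |X ∩ ⋂_{i∈Δ} Xᵢ| = 0, where |·| counts cosets of K₀ = H ∩ H₁ ∩ ... ∩ Hₙ contained in the set. -/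
open Pointwise

private lemma mem_vadd_coset {A : Type*} [AddCommGroup A] {G : AddSubgroup A} {b t : A} :
    t ∈ b +ᵥ (G : Set A) ↔ t - b ∈ G := by
  rw [Set.mem_vadd_set_iff_neg_vadd_mem, vadd_eq_add, neg_add_eq_sub]
  rfl

private lemma coset_self {A : Type*} [AddCommGroup A] (K : AddSubgroup A) (t : A) :
    t ∈ t +ᵥ (K : Set A) := by
  rw [mem_vadd_coset]; simpa using zero_mem K

private lemma coset_subset {A : Type*} [AddCommGroup A] {K G : AddSubgroup A}
    (hKG : ∀ x ∈ K, x ∈ G) {b t : A}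
    (ht : t ∈ b +ᵥ (G : Set A)) : (t +ᵥ (K : Set A)) ⊆ b +ᵥ (G : Set A) := by
  intro x hx
  rw [mem_vadd_coset] at hx ht ⊢
  have h1 : x - t ∈ G := hKG _ hx
  simpa [sub_add_sub_cancel] using add_mem h1 ht

private lemma coset_eq {A : Type*} [AddCommGroup A] {K : AddSubgroup A} {t s : A}
    (h : t - s ∈ K) : t +ᵥ (K : Set A) = s +ᵥ (K : Set A) := by
  ext x
  rw [mem_vadd_coset, mem_vadd_coset]
  constructor <;> intro hx
  · simpa [sub_add_sub_cancel] using add_mem hx h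
  · simpa [neg_sub, sub_add_sub_cancel] using add_mem hx (neg_mem h)

/-- Inclusion–exclusion for cosets: `X ⊆ X₁ ∪ … ∪ Xₙ` iff the alternating sum over subsets
`Δ ⊆ {1,…,n}` of the number of cosets of `K₀ = H ∩ ⋂ᵢ Hᵢ` contained in `X ∩ ⋂_{i∈Δ} Xᵢ`
vanishes. -/
theorem coset_inclusion_exclusion {A : Type*} [AddCommGroup A] {n : ℕ}
    (H : AddSubgroup A) (Hs : Fin n → AddSubgroup A) (a : A) (c : Fin n → A)
    (K₀ : AddSubgroup A) (hK₀ : K₀ = H ⊓ ⨅ i, Hs i)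
    (hfin : K₀.relIndex H ≠ 0) :
    (a +ᵥ (H : Set A)) ⊆ (⋃ i, (c i +ᵥ (Hs i : Set A))) ↔
      ∑ Δ : Finset (Fin n),
          (-1 : ℤ) ^ Δ.card *
            (Nat.card {C : Set A // (∃ t : A, C = t +ᵥ (K₀ : Set A)) ∧
                C ⊆ (a +ᵥ (H : Set A)) ∩ ⋂ i ∈ Δ, (c i +ᵥ (Hs i : Set A))} : ℤ) = 0 := by
  classical
  have hKH : ∀ x ∈ K₀, x ∈ H := by
    intro x hx; rw [hK₀] at hx; exact hx.1
  have hKi : ∀ i, ∀ x ∈ K₀, x ∈ Hs i := by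
    intro i x hx; rw [hK₀] at hx
    exact (AddSubgroup.mem_iInf.mp hx.2) i
  set X : Set A := a +ᵥ (H : Set A) with hX
  set Xi : Fin n → Set A := fun i => c i +ᵥ (Hs i : Set A) with hXi
  -- the set of K₀-cosets inside X is finite
  set 𝒞 : Set (Set A) := {C | (∃ t : A, C = t +ᵥ (K₀ : Set A)) ∧ C ⊆ X} with h𝒞
  have hfinq : Finite (H ⧸ K₀.addSubgroupOf H) :=
    Nat.finite_of_card_ne_zero hfin
  set g : (H ⧸ K₀.addSubgroupOf H) → Set A :=
    fun q => (a + (q.out : A)) +ᵥ (K₀ : Set A) with hg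
  have h𝒞sub : 𝒞 ⊆ Set.range g := by
    rintro C ⟨⟨t, rfl⟩, hsub⟩
    have ht : t ∈ X := hsub (coset_self K₀ t)
    have hta : t - a ∈ H := mem_vadd_coset.mp ht
    refine ⟨QuotientAddGroup.mk (⟨t - a, hta⟩ : H), ?_⟩
    have hout : ((QuotientAddGroup.mk (⟨t - a, hta⟩ : H) :
        H ⧸ K₀.addSubgroupOf H).out : H) - ⟨t - a, hta⟩ ∈ K₀.addSubgroupOf H := by
      rw [AddSubgroup.sub_mem_comm_iff]
      have := QuotientAddGroup.eq.mp
        ((QuotientAddGroup.mk (⟨t - a, hta⟩ : H) : H ⧸ K₀.addSubgroupOf H).out_eq')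
      simpa [neg_add_eq_sub] using this
    have hmem : ((QuotientAddGroup.mk (⟨t - a, hta⟩ : H) :
        H ⧸ K₀.addSubgroupOf H).out : A) - (t - a) ∈ K₀ := by
      simpa [AddSubgroup.mem_addSubgroupOf] using hout
    refine coset_eq ?_
    simpa [add_sub_assoc, sub_sub_eq_add_sub, add_comm, add_left_comm, sub_eq_add_neg,
      add_assoc] using hmem
  have hfin𝒞 : 𝒞.Finite := (Set.finite_range g).subset h𝒞sub
  set F : Finset (Set A) := hfin𝒞.toFinset with hF
  have hFmem : ∀ C, C ∈ F ↔ (∃ t : A, C = t +ᵥ (K₀ : Set A)) ∧ C ⊆ X := by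
    intro C; rw [Set.Finite.mem_toFinset]; rfl
  -- identify each Nat.card with a Finset card
  have hcard : ∀ Δ : Finset (Fin n),
      (Nat.card {C : Set A // (∃ t : A, C = t +ᵥ (K₀ : Set A)) ∧
          C ⊆ X ∩ ⋂ i ∈ Δ, Xi i} : ℤ)
        = ((F.filter (fun C => C ⊆ ⋂ i ∈ Δ, Xi i)).card : ℤ) := by
    intro Δ
    congr 1
    have hseteq : {C : Set A | (∃ t : A, C = t +ᵥ (K₀ : Set A)) ∧
        C ⊆ X ∩ ⋂ i ∈ Δ, Xi i}
        = ↑(F.filter (fun C => C ⊆ ⋂ i ∈ Δ, Xi i)) := by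
      ext C
      simp only [Set.mem_setOf_eq, Finset.coe_filter, hFmem, Set.subset_inter_iff]
      tauto
    calc Nat.card {C : Set A // (∃ t : A, C = t +ᵥ (K₀ : Set A)) ∧
          C ⊆ X ∩ ⋂ i ∈ Δ, Xi i}
        = {C : Set A | (∃ t : A, C = t +ᵥ (K₀ : Set A)) ∧
            C ⊆ X ∩ ⋂ i ∈ Δ, Xi i}.ncard := Nat.card_coe_set_eq _
      _ = _ := by rw [hseteq, Set.ncard_coe_finset]
  -- compute the alternating sum
  set S : Set A → Finset (Fin n) := fun C => Finset.univ.filter (fun i => C ⊆ Xi i) with hS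
  have key : ∑ Δ : Finset (Fin n), (-1 : ℤ) ^ Δ.card *
      ((F.filter (fun C => C ⊆ ⋂ i ∈ Δ, Xi i)).card : ℤ)
      = ((F.filter (fun C => S C = ∅)).card : ℤ) := by
    have step1 : ∀ Δ : Finset (Fin n),
        ((F.filter (fun C => C ⊆ ⋂ i ∈ Δ, Xi i)).card : ℤ)
          = ∑ C ∈ F, if Δ ⊆ S C then (1 : ℤ) else 0 := by
      intro Δ
      rw [Finset.card_filter]
      push_cast
      refine Finset.sum_congr rfl fun C _ => ?_
      have : (C ⊆ ⋂ i ∈ Δ, Xi i) ↔ Δ ⊆ S C := by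
        rw [Set.subset_iInter₂_iff]
        constructor
        · intro h i hi
          simp only [hS, Finset.mem_filter, Finset.mem_univ, true_and]
          exact h i hi
        · intro h i hi
          have := h hi
          simp only [hS, Finset.mem_filter] at this
          exact this.2
      simp [this]
    calc ∑ Δ : Finset (Fin n), (-1 : ℤ) ^ Δ.card *
          ((F.filter (fun C => C ⊆ ⋂ i ∈ Δ, Xi i)).card : ℤ)
        = ∑ Δ : Finset (Fin n), ∑ C ∈ F,
            (-1 : ℤ) ^ Δ.card * (if Δ ⊆ S C then (1 : ℤ) else 0) := by
          refine Finset.sum_congr rfl fun Δ _ => ?_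
          rw [step1, Finset.mul_sum]
      _ = ∑ C ∈ F, ∑ Δ : Finset (Fin n),
            (-1 : ℤ) ^ Δ.card * (if Δ ⊆ S C then (1 : ℤ) else 0) := Finset.sum_comm
      _ = ∑ C ∈ F, ∑ Δ ∈ (S C).powerset, (-1 : ℤ) ^ Δ.card := by
          refine Finset.sum_congr rfl fun C _ => ?_
          simp only [mul_ite, mul_one, mul_zero]
          rw [← Finset.sum_filter]
          congr 1
          ext Δ
          simp [Finset.mem_powerset]
      _ = ∑ C ∈ F, (if S C = ∅ then (1 : ℤ) else 0) := by
          refine Finset.sum_congr rfl fun C _ => ?_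
          exact Finset.sum_powerset_neg_one_pow_card
      _ = ((F.filter (fun C => S C = ∅)).card : ℤ) := by
          rw [Finset.card_filter]; push_cast; rfl
  -- final equivalence
  have hcover : X ⊆ (⋃ i, Xi i) ↔ ∀ C ∈ F, (S C).Nonempty := by
    constructor
    · intro hsub C hC
      rw [hFmem] at hC
      obtain ⟨⟨t, rfl⟩, hCX⟩ := hC
      have ht : t ∈ X := hCX (coset_self K₀ t)
      obtain ⟨_, ⟨i, rfl⟩, hti⟩ := hsub ht
      refine ⟨i, ?_⟩
      simp only [hS, Finset.mem_filter, Finset.mem_univ, true_and]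
      exact coset_subset (hKi i) hti
    · intro hall x hx
      have hxC : (x +ᵥ (K₀ : Set A)) ∈ F := by
        rw [hFmem]
        exact ⟨⟨x, rfl⟩, coset_subset hKH hx⟩
      obtain ⟨i, hi⟩ := hall _ hxC
      simp only [hS, Finset.mem_filter, Finset.mem_univ, true_and] at hi
      exact Set.mem_iUnion.mpr ⟨i, hi (coset_self K₀ x)⟩
  rw [hcover]
  simp only [show ∀ i, c i +ᵥ ((Hs i : Set A)) = Xi i from fun _ => rfl]
  simp only [hcard]
  rw [key]
  rw [Nat.cast_eq_zero, Finset.card_eq_zero, Finset.filter_eq_empty_iff]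
  constructor
  · intro h C hC
    exact Finset.nonempty_iff_ne_empty.mp (h C hC)
  · intro h C hC
    exact Finset.nonempty_iff_ne_empty.mpr (h hC)
end

section
/- Stability via indiscernibles for coset-type formulas: let A be an abelian group, S ≤ Aⁿ × Aᵐ a subgroup, and define φ*(a⃗, b⃗) to hold iff (a⃗, b⃗) ∈ S. Suppose (a⃗ᵢ, b⃗ᵢ)_{i<ω} is a sequence such that for all i < j and k < l, φ*(a⃗ⱼ, b⃗ᵢ) ↔ φ*(a⃗ₗ, b⃗ₖ) (order-indiscernibility for φ*). Then for i < j, φ*(a⃗ⱼ, b⃗ᵢ) holds iff φ*(a⃗ᵢ, b⃗ⱼ) holds, provided additionally φ*(a⃗ᵢ, b⃗ᵢ)-pattern indiscernibility: for all i₁<...<i_r and j₁<...<j_r the truth values of φ* on corresponding pairs agree. -/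
/-- Stability via indiscernibles for the relation defined by a subgroup `S ≤ Aⁿ × Aᵐ`:
if the truth value of `(a⃗ᵢ, b⃗ⱼ) ∈ S` depends only on the order type of `(i,j)`, then
for `i < j`, `(a⃗ⱼ, b⃗ᵢ) ∈ S ↔ (a⃗ᵢ, b⃗ⱼ) ∈ S`. -/
theorem stability_of_subgroup_relation {A : Type*} [AddCommGroup A] {n m : ℕ}
    (S : AddSubgroup ((Fin n → A) × (Fin m → A)))
    (a : ℕ → (Fin n → A)) (b : ℕ → (Fin m → A))
    (hind : ∀ i j k l : ℕ, (i < j ↔ k < l) → (i = j ↔ k = l) →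
      ((a i, b j) ∈ S ↔ (a k, b l) ∈ S)) :
    ∀ i j : ℕ, i < j → ((a j, b i) ∈ S ↔ (a i, b j) ∈ S) := by
  intro i j hij
  constructor
  · intro hp
    have h1 : (a (j+1), b i) ∈ S := (hind (j+1) i j i (by omega) (by omega)).2 hp
    have h2 : (a (j+1), b j) ∈ S := (hind (j+1) j j i (by omega) (by omega)).2 hp
    have d : ((0 : Fin n → A), b i - b j) ∈ S := by
      have := S.sub_mem h1 h2
      simpa [Prod.mk_sub_mk] using this
    have hjj : (a j, b j) ∈ S := by
      have := S.sub_mem hp d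
      simpa [Prod.mk_sub_mk, sub_sub_cancel] using this
    have hii : (a i, b i) ∈ S := (hind i i j j (by omega) (by omega)).2 hjj
    have := S.sub_mem hii d
    simpa [Prod.mk_sub_mk, sub_sub_cancel] using this
  · intro hp
    have h1 : (a i, b (j+1)) ∈ S := (hind i (j+1) i j (by omega) (by omega)).2 hp
    have h2 : (a j, b (j+1)) ∈ S := (hind j (j+1) i j (by omega) (by omega)).2 hp
    have d : (a i - a j, (0 : Fin m → A)) ∈ S := by
      have := S.sub_mem h1 h2
      simpa [Prod.mk_sub_mk] using this
    have hjj : (a j, b j) ∈ S := by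
      have := S.sub_mem hp d
      simpa [Prod.mk_sub_mk, sub_sub_cancel] using this
    have hii : (a i, b i) ∈ S := (hind i i j j (by omega) (by omega)).2 hjj
    have := S.sub_mem hii d
    simpa [Prod.mk_sub_mk, sub_sub_cancel] using this
end
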